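/- Let (λ_k)_{k∈ℤ} be points of ℂ∖{0} with (λ_k − λ_{k,0})_{k∈ℤ} ∈ ℓ²_{−1,3}, and let (μ_k)_{k∈ℤ} be points of ℂ∖{0} with ∑_{k∈ℤ} |μ_k − (−1)^k|² < ∞. Then for all sequences (δλ_k)_{k∈ℤ}, (δ̃λ_k)_{k∈ℤ} ∈ ℓ²_{−1,3} and all sequences (δμ_k)_{k∈ℤ}, (δ̃μ_k)_{k∈ℤ} with ∑_{k∈ℤ} |δμ_k|² < ∞ and ∑_{k∈ℤ} |δ̃μ_k|² < ∞, the series ∑_{k∈ℤ} ((δλ_k/λ_k)·(δ̃μ_k/μ_k) − (δ̃λ_k/λ_k)·(δμ_k/μ_k)) converges absolutely. (Hence the symplectic form Ω̃ on the tangent space of the space of asymptotic divisors is well-defined.) -/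

import Mathlib

open Complex

noncomputable section

/-- The lambda-coordinates `λ_{k,0}` of the vacuum spectral divisor. -/
noncomputable def lam0 (k : ℤ) : ℝ :=
  8 * Real.pi ^ 2 * (k : ℝ) ^ 2 + 4 * Real.pi * (k : ℝ) * Real.sqrt (4 * Real.pi ^ 2 * (k : ℝ) ^ 2 - 1) - 1

/-- Membership of a two-sided sequence in `ℓ²_{n,m}`:
`∑_{k≥1} |kⁿ·a_k|² < ∞` and `∑_{k≤−1} ||k|^m·a_k|² < ∞`. -/
def l2seq (n m : ℤ) (a : ℤ → ℂ) : Prop :=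
  Summable (fun j : ℕ => (((j : ℝ) + 1) ^ n * ‖a ((j : ℤ) + 1)‖) ^ 2) ∧
  Summable (fun j : ℕ => (((j : ℝ) + 1) ^ m * ‖a (-((j : ℤ) + 1))‖) ^ 2)

-- lower bound at positive reals
lemma lam0_pos_ge' (x : ℝ) (hx : 1 ≤ x) :
    2 * x^2 ≤ 8 * Real.pi ^ 2 * x ^ 2 + 4 * Real.pi * x * Real.sqrt (4 * Real.pi ^ 2 * x ^ 2 - 1) - 1 := by
  have hπ := Real.pi_gt_three
  have hs : 0 ≤ Real.sqrt (4 * Real.pi ^ 2 * x ^ 2 - 1) := Real.sqrt_nonneg _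
  have h9 : (0:ℝ) ≤ Real.pi^2 - 9 := by nlinarith
  nlinarith [mul_nonneg (show (0:ℝ) ≤ 4 * Real.pi * x by positivity) hs,
    mul_nonneg h9 (sq_nonneg x), sq_nonneg (x - 1)]

lemma lam0_pos_ge (n : ℕ) (hn : 1 ≤ n) : 2 * (n:ℝ)^2 ≤ lam0 (n:ℤ) := by
  have hn' : (1:ℝ) ≤ (n:ℝ) := by exact_mod_cast hn
  unfold lam0
  push_cast
  exact lam0_pos_ge' (n:ℝ) hn'

lemma lam0_neg_ge' (x : ℝ) (hx : 1 ≤ x) :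
    1 / (160 * x^2) ≤ 8 * Real.pi ^ 2 * x ^ 2 + 4 * Real.pi * (-x) * Real.sqrt (4 * Real.pi ^ 2 * x ^ 2 - 1) - 1 := by
  have hπ := Real.pi_gt_three
  have hπ2 := Real.pi_lt_d2
  set y : ℝ := 2 * Real.pi * x with hy
  have hy6 : 6 ≤ y := by nlinarith
  have harg : 4 * Real.pi ^ 2 * x ^ 2 - 1 = y^2 - 1 := by rw [hy]; ring
  set s := Real.sqrt (4 * Real.pi ^ 2 * x ^ 2 - 1) with hsdef
  have hs0 : 0 ≤ s := Real.sqrt_nonneg _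
  have hs2 : s^2 = y^2 - 1 := by
    rw [hsdef, harg, Real.sq_sqrt]; nlinarith
  have hsy : s ≤ y := by nlinarith
  have h1 : (y + s) * (y - s) = 1 := by nlinarith [hs2]
  have h2 : 1 ≤ 2*y*(y-s) := by nlinarith [sq_nonneg (y - s), h1]
  have h3 : 1 ≤ (2*y*(y-s))^2 := by nlinarith [h2, sq_nonneg (2*y*(y-s) - 1)]
  have h5 : (2*y^2 - 2*y*s - 1)*(4*y^2) = (2*y*(y-s))^2 := by linear_combination (-4*y^2) * hs2
  have hkey : 1/(4*y^2) ≤ 2*y^2 - 2*y*s - 1 := by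
    rw [div_le_iff₀ (by positivity)]
    rw [h5]; exact h3
  have hbound : 1/(160 * x^2) ≤ 1/(4*y^2) := by
    apply div_le_div_of_nonneg_left (by norm_num) (by positivity)
    rw [hy]
    nlinarith [mul_nonneg (show (0:ℝ) ≤ 10 - Real.pi^2 by nlinarith) (sq_nonneg x)]
  have : 8 * Real.pi ^ 2 * x ^ 2 + 4 * Real.pi * (-x) * s - 1 = 2*y^2 - 2*y*s - 1 := by
    rw [hy]; ring
  rw [this]; linarith

lemma lam0_neg_ge (n : ℕ) (hn : 1 ≤ n) : 1 / (160 * (n:ℝ)^2) ≤ lam0 (-(n:ℤ)) := by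
  have hn' : (1:ℝ) ≤ (n:ℝ) := by exact_mod_cast hn
  unfold lam0
  push_cast
  rw [neg_sq]
  have := lam0_neg_ge' (n:ℝ) hn'
  convert this using 3 <;> ring

lemma summable_div_mu (μDiv : ℤ → ℂ)
    (hμ : Summable (fun k : ℤ => ‖μDiv k - (-1 : ℂ) ^ k‖ ^ 2))
    (d : ℤ → ℂ) (hd : Summable (fun k : ℤ => ‖d k‖ ^ 2)) :
    Summable (fun k : ℤ => ‖d k / μDiv k‖ ^ 2) := by
  refine Summable.of_norm_bounded_eventually (g := fun k => 4 * ‖d k‖ ^ 2) (hd.mul_left 4) ?_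
  have h0 : ∀ᶠ k in Filter.cofinite, ‖μDiv k - (-1:ℂ)^k‖ ^ 2 < 1/4 :=
    hμ.tendsto_cofinite_zero.eventually_lt_const (by norm_num)
  filter_upwards [h0] with k hk
  have hnn := norm_nonneg (μDiv k - (-1:ℂ)^k)
  have habs : ‖μDiv k - (-1:ℂ)^k‖ < 1/2 := by nlinarith
  have h1 : (1:ℝ)/2 ≤ ‖μDiv k‖ := by
    have t1 : ‖(-1:ℂ)^k‖ - ‖(-1:ℂ)^k - μDiv k‖ ≤ ‖(-1:ℂ)^k - ((-1:ℂ)^k - μDiv k)‖ :=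
      norm_sub_norm_le _ _
    have t2 : ‖(-1:ℂ)^k‖ = 1 := by simp
    have t3 : ‖(-1:ℂ)^k - μDiv k‖ = ‖μDiv k - (-1:ℂ)^k‖ := by
      rw [norm_sub_rev]
    have t4 : ‖(-1:ℂ)^k - ((-1:ℂ)^k - μDiv k)‖ = ‖μDiv k‖ := by
      norm_num
    rw [t2, t3, t4] at t1
    linarith
  have h2 : ‖d k / μDiv k‖ ≤ 2 * ‖d k‖ := by
    rw [norm_div, div_le_iff₀ (by linarith)]
    nlinarith [norm_nonneg (d k)]
  rw [Real.norm_of_nonneg (by positivity)]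
  nlinarith [norm_nonneg (d k / μDiv k), norm_nonneg (d k)]

lemma summable_div_lam (L : ℤ → ℂ)
    (hlam : l2seq (-1) 3 (fun k => L k - (lam0 k : ℂ)))
    (d : ℤ → ℂ) (hd : l2seq (-1) 3 d) :
    Summable (fun k : ℤ => ‖d k / L k‖ ^ 2) := by
  apply Summable.of_nat_of_neg
  · -- positive side
    -- summable majorant
    have hG : Summable (fun n : ℕ => ((n:ℝ)⁻¹ * ‖d (n:ℤ)‖)^2) := by
      rw [← summable_nat_add_iff 1]
      convert hd.1 using 2 with j
      case e'_3 => rfl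
      rw [zpow_neg_one]
      push_cast
      rfl
    -- the deviation terms tend to zero
    have hT : Filter.Tendsto
        (fun n : ℕ => (((n:ℝ))⁻¹ * ‖L (n:ℤ) - (lam0 (n:ℤ) : ℂ)‖)^2)
        Filter.atTop (nhds 0) := by
      rw [← Filter.tendsto_add_atTop_iff_nat 1]
      have h1 := hlam.1.tendsto_atTop_zero
      convert h1 using 2 with j
      rw [zpow_neg_one]
      push_cast
      rfl
    have hdev := hT.eventually_lt_const (show (0:ℝ) < 1 by norm_num)
    refine Summable.of_norm_bounded_eventually hG ?_
    rw [Nat.cofinite_eq_atTop]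
    filter_upwards [hdev, Filter.eventually_ge_atTop 1] with n h1 h2
    have hn' : (1:ℝ) ≤ (n:ℝ) := by exact_mod_cast h2
    set A := ‖L (n:ℤ) - (lam0 (n:ℤ) : ℂ)‖ with hA
    have hA0 : 0 ≤ A := norm_nonneg _
    have hinv : (0:ℝ) ≤ (n:ℝ)⁻¹ := by positivity
    have hAn : A ≤ (n:ℝ) := by
      by_contra hc
      push_neg at hc
      have : 1 < (n:ℝ)⁻¹ * A := by
        rw [lt_inv_mul_iff₀ (by linarith)]
        linarith
      nlinarith [mul_nonneg hinv hA0]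
    have hl0 : 2*(n:ℝ)^2 ≤ lam0 (n:ℤ) := lam0_pos_ge n h2
    have hLn : (n:ℝ)^2 ≤ ‖L (n:ℤ)‖ := by
      have t1 : ‖((lam0 (n:ℤ) : ℝ) : ℂ)‖ - ‖((lam0 (n:ℤ) : ℝ) : ℂ) - L (n:ℤ)‖ ≤
          ‖((lam0 (n:ℤ) : ℝ) : ℂ) - (((lam0 (n:ℤ) : ℝ) : ℂ) - L (n:ℤ))‖ := norm_sub_norm_le _ _
      have t2 : ‖((lam0 (n:ℤ) : ℝ) : ℂ)‖ = lam0 (n:ℤ) := by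
        rw [Complex.norm_real, Real.norm_of_nonneg (by nlinarith)]
      have t3 : ‖((lam0 (n:ℤ) : ℝ) : ℂ) - L (n:ℤ)‖ = A := by rw [norm_sub_rev]
      have t4 : ‖((lam0 (n:ℤ) : ℝ) : ℂ) - (((lam0 (n:ℤ) : ℝ) : ℂ) - L (n:ℤ))‖
          = ‖L (n:ℤ)‖ := by norm_num
      rw [t2, t3, t4] at t1
      nlinarith
    have hkey : ‖d (n:ℤ) / L (n:ℤ)‖ ≤ (n:ℝ)⁻¹ * ‖d (n:ℤ)‖ := by
      rw [norm_div, inv_mul_eq_div]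
      apply div_le_div_of_nonneg_left (norm_nonneg _) (by linarith)
      nlinarith
    rw [Real.norm_of_nonneg (by positivity)]
    have := norm_nonneg (d (n:ℤ) / L (n:ℤ))
    nlinarith [mul_nonneg hinv (norm_nonneg (d (n:ℤ)))]
  · -- negative side
    have hG : Summable (fun n : ℕ => 320^2 * (((n:ℝ))^3 * ‖d (-(n:ℤ))‖)^2) := by
      apply Summable.mul_left
      rw [← summable_nat_add_iff 1]
      convert hd.2 using 2 with j
      case e'_3 => rfl
      rw [zpow_ofNat]
      push_cast
      ring
    have hT : Filter.Tendsto
        (fun n : ℕ => (((n:ℝ))^3 * ‖L (-(n:ℤ)) - (lam0 (-(n:ℤ)) : ℂ)‖)^2)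
        Filter.atTop (nhds 0) := by
      rw [← Filter.tendsto_add_atTop_iff_nat 1]
      have h1 := hlam.2.tendsto_atTop_zero
      convert h1 using 2 with j
      rw [zpow_ofNat]
      push_cast
      ring
    have hdev := hT.eventually_lt_const (show (0:ℝ) < (1/640)^2 by norm_num)
    refine Summable.of_norm_bounded_eventually hG ?_
    rw [Nat.cofinite_eq_atTop]
    filter_upwards [hdev, Filter.eventually_ge_atTop 1] with n h1 h2
    have hn' : (1:ℝ) ≤ (n:ℝ) := by exact_mod_cast h2
    set A := ‖L (-(n:ℤ)) - (lam0 (-(n:ℤ)) : ℂ)‖ with hA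
    have hA0 : 0 ≤ A := norm_nonneg _
    have hn3 : (0:ℝ) < (n:ℝ)^3 := by positivity
    have ht : (n:ℝ)^3 * A ≤ 1/640 := by
      nlinarith [mul_nonneg (le_of_lt hn3) hA0]
    have hAn : A ≤ 1/(640 * (n:ℝ)^3) := by
      rw [le_div_iff₀ (by positivity)]
      nlinarith
    have hl0 : 1/(160 * (n:ℝ)^2) ≤ lam0 (-(n:ℤ)) := lam0_neg_ge n h2
    have hLn : 1/(320 * (n:ℝ)^2) ≤ ‖L (-(n:ℤ))‖ := by
      have t1 : ‖((lam0 (-(n:ℤ)) : ℝ) : ℂ)‖ - ‖((lam0 (-(n:ℤ)) : ℝ) : ℂ) - L (-(n:ℤ))‖ ≤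
          ‖((lam0 (-(n:ℤ)) : ℝ) : ℂ) - (((lam0 (-(n:ℤ)) : ℝ) : ℂ) - L (-(n:ℤ)))‖ :=
        norm_sub_norm_le _ _
      have hl00 : (0:ℝ) ≤ lam0 (-(n:ℤ)) := le_trans (by positivity) hl0
      have t2 : ‖((lam0 (-(n:ℤ)) : ℝ) : ℂ)‖ = lam0 (-(n:ℤ)) := by
        rw [Complex.norm_real, Real.norm_of_nonneg hl00]
      have t3 : ‖((lam0 (-(n:ℤ)) : ℝ) : ℂ) - L (-(n:ℤ))‖ = A := by rw [norm_sub_rev]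
      have t4 : ‖((lam0 (-(n:ℤ)) : ℝ) : ℂ) - (((lam0 (-(n:ℤ)) : ℝ) : ℂ) - L (-(n:ℤ)))‖
          = ‖L (-(n:ℤ))‖ := by norm_num
      rw [t2, t3, t4] at t1
      have hAn2 : A ≤ 1/(640 * (n:ℝ)^2) := by
        refine le_trans hAn ?_
        apply div_le_div_of_nonneg_left (by norm_num) (by positivity)
        nlinarith
      have : 1/(160 * (n:ℝ)^2) - 1/(640 * (n:ℝ)^2) = 3/(640 * (n:ℝ)^2) := by
        field_simp; ring
      have h320 : 1/(320 * (n:ℝ)^2) ≤ 3/(640 * (n:ℝ)^2) := by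
        rw [div_le_div_iff₀ (by positivity) (by positivity)]
        nlinarith [sq_nonneg ((n:ℝ))]
      linarith
    have hkey : ‖d (-(n:ℤ)) / L (-(n:ℤ))‖ ≤ 320 * (n:ℝ)^3 * ‖d (-(n:ℤ))‖ := by
      rw [norm_div]
      have hL0 : (0:ℝ) < ‖L (-(n:ℤ))‖ := lt_of_lt_of_le (by positivity) hLn
      rw [div_le_iff₀ hL0]
      have step : 1 / (320 * (n:ℝ)^2) * (320 * (n:ℝ)^3) = (n:ℝ) := by
        field_simp
      calc ‖d (-(n:ℤ))‖
          = ‖d (-(n:ℤ))‖ * 1 := by ring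
        _ ≤ 320 * (n:ℝ)^3 * ‖d (-(n:ℤ))‖ * ‖L (-(n:ℤ))‖ := by
            nlinarith [norm_nonneg (d (-(n:ℤ))), mul_le_mul_of_nonneg_left hLn
              (show (0:ℝ) ≤ 320 * (n:ℝ)^3 * ‖d (-(n:ℤ))‖ by positivity)]
    rw [Real.norm_of_nonneg (by positivity)]
    calc ‖d (-(n:ℤ)) / L (-(n:ℤ))‖^2
        ≤ (320 * (n:ℝ)^3 * ‖d (-(n:ℤ))‖)^2 := by
          apply pow_le_pow_left₀ (norm_nonneg _) hkey
      _ = 320^2 * (((n:ℝ))^3 * ‖d (-(n:ℤ))‖)^2 := by ring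

/-- The series defining the symplectic form `Ω̃` on the tangent space of the
space of asymptotic divisors converges absolutely. -/
theorem Omega_tilde_summable (lamDiv μDiv : ℤ → ℂ)
    (hlamne : ∀ k, lamDiv k ≠ 0) (hμne : ∀ k, μDiv k ≠ 0)
    (hlam : l2seq (-1) 3 (fun k => lamDiv k - (lam0 k : ℂ)))
    (hμ : Summable (fun k : ℤ => ‖μDiv k - (-1 : ℂ) ^ k‖ ^ 2))
    (dlam dlam' : ℤ → ℂ)
    (hdlam : l2seq (-1) 3 dlam) (hdlam' : l2seq (-1) 3 dlam')
    (dμ dμ' : ℤ → ℂ)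
    (hdμ : Summable (fun k : ℤ => ‖dμ k‖ ^ 2))
    (hdμ' : Summable (fun k : ℤ => ‖dμ' k‖ ^ 2)) :
    Summable (fun k : ℤ => ‖
      dlam k / lamDiv k * (dμ' k / μDiv k) - dlam' k / lamDiv k * (dμ k / μDiv k)‖) := by
  have S1 := summable_div_lam lamDiv hlam dlam hdlam
  have S1' := summable_div_lam lamDiv hlam dlam' hdlam'
  have S2 := summable_div_mu μDiv hμ dμ hdμ
  have S2' := summable_div_mu μDiv hμ dμ' hdμ'
  refine Summable.of_nonneg_of_le (fun k => norm_nonneg _) (fun k => ?_)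
    ((S1.add S2').add (S1'.add S2))
  have h1 : ‖dlam k / lamDiv k * (dμ' k / μDiv k) - dlam' k / lamDiv k * (dμ k / μDiv k)‖
      ≤ ‖dlam k / lamDiv k‖ * ‖dμ' k / μDiv k‖
        + ‖dlam' k / lamDiv k‖ * ‖dμ k / μDiv k‖ := by
    calc ‖dlam k / lamDiv k * (dμ' k / μDiv k) - dlam' k / lamDiv k * (dμ k / μDiv k)‖
        ≤ ‖dlam k / lamDiv k * (dμ' k / μDiv k)‖
          + ‖dlam' k / lamDiv k * (dμ k / μDiv k)‖ := by
          exact norm_sub_le _ _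
      _ = ‖dlam k / lamDiv k‖ * ‖dμ' k / μDiv k‖
          + ‖dlam' k / lamDiv k‖ * ‖dμ k / μDiv k‖ := by
          rw [norm_mul, norm_mul]
  refine le_trans h1 ?_
  nlinarith [sq_nonneg (‖dlam k / lamDiv k‖ - ‖dμ' k / μDiv k‖),
    sq_nonneg (‖dlam' k / lamDiv k‖ - ‖dμ k / μDiv k‖)]

end
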